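/- Let m be an integer and b a real number with 0 < b, and let n ≥ 1 and f be natural numbers with |m| < 2^(n−1). Then b^(m / 2^f) = ∏_{j=0}^{n-2} c_j, where c_j = β^(2^j / 2^f) if the j-th bit of |m| is 1 and c_j = 1 otherwise, and where β = b if m ≥ 0 and β = b⁻¹ if m < 0. All exponentiations with real exponents are real powers (rpow). -/
import Mathlib

lemma bits_sum : ∀ (t k : ℕ), k < 2 ^ t →
    (∑ j ∈ Finset.range t, if Nat.testBit k j then 2 ^ j else 0) = k := by
  intro t
  induction t with
  | zero => intro k hk; have : k = 0 := by omega
            subst this; simp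
  | succ t ih =>
    intro k hk
    rw [Finset.sum_range_succ']
    have h1 : ∀ j, Nat.testBit k (j + 1) = Nat.testBit (k / 2) j := by
      intro j; rw [Nat.testBit_add_one]
    have h2 : (∑ j ∈ Finset.range t, if Nat.testBit k (j + 1) then 2 ^ (j + 1) else 0)
        = 2 * ∑ j ∈ Finset.range t, if Nat.testBit (k / 2) j then 2 ^ j else 0 := by
      rw [Finset.mul_sum]
      refine Finset.sum_congr rfl fun j _ => ?_
      rw [h1]; split <;> ring
    have hk2 : k / 2 < 2 ^ t := by omega
    rw [h2, ih _ hk2]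
    rw [Nat.testBit_zero]
    have := Nat.div_add_mod k 2
    rcases Nat.mod_two_eq_zero_or_one k with h | h <;> simp [h] <;> omega

/-- Full correctness of EXP for signed fixed-point powers. -/
theorem exp_correct_signed (m : ℤ) (b : ℝ) (hb : 0 < b) (n f : ℕ) (hn : 1 ≤ n)
    (hm : m.natAbs < 2 ^ (n - 1)) :
    b ^ ((m : ℝ) / 2 ^ f) =
      ∏ j ∈ Finset.range (n - 1),
        (if Nat.testBit m.natAbs j then
            (if 0 ≤ m then b else b⁻¹) ^ ((2 ^ j : ℝ) / 2 ^ f)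
          else 1) := by
  set β : ℝ := if 0 ≤ m then b else b⁻¹ with hβ
  have hβpos : 0 < β := by
    rw [hβ]; split
    · exact hb
    · exact inv_pos.mpr hb
  have key : b ^ ((m : ℝ) / 2 ^ f) = β ^ ((m.natAbs : ℝ) / 2 ^ f) := by
    by_cases hm0 : 0 ≤ m
    · have h1 : ((m.natAbs : ℝ)) = (m : ℝ) := by
        rw [Nat.cast_natAbs, abs_of_nonneg hm0]
      simp only [hβ, if_pos hm0]
      rw [h1]
    · simp only [hβ, if_neg hm0]
      have hcast : ((m.natAbs : ℝ)) = -(m : ℝ) := by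
        rw [Nat.cast_natAbs, abs_of_nonpos (le_of_not_ge hm0)]; push_cast; ring
      rw [Real.inv_rpow hb.le, ← Real.rpow_neg hb.le, hcast]
      ring_nf
  rw [key]
  have hsum := bits_sum (n - 1) m.natAbs hm
  have hcast : ((m.natAbs : ℝ)) =
      ∑ j ∈ Finset.range (n - 1), (if Nat.testBit m.natAbs j then (2 : ℝ) ^ j else 0) := by
    conv_lhs => rw [← hsum]
    push_cast
    refine Finset.sum_congr rfl fun j _ => ?_
    split <;> simp
  rw [hcast, Finset.sum_div, Real.rpow_sum_of_pos hβpos]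
  refine Finset.prod_congr rfl fun j _ => ?_
  split
  · rfl
  · simp
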